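/- arXiv:2508.16186 — 4 statements merged into one kernel-verified Lean document; each statement's English description precedes it below -/
import Mathlib

section
/- Let n ≥ 1 be an integer, let α₁, …, αₙ > 0 and τ₁, …, τₙ > 0 be real numbers, and set S(t) = Σᵢ₌₁ⁿ αᵢ · h(t/τᵢ) for t ∈ ℝ. If S is not differentiable at a point τ > 0, then S is not differentiable at τ/4 or S is not differentiable at 4τ. -/
/-- The inverse hyperbolic tangent. -/
noncomputable def artanh (x : ℝ) : ℝ := (1 / 2) * Real.log ((1 + x) / (1 - x))

/-- The Hall distribution pdf. -/
noncomputable def hallPdf (t : ℝ) : ℝ :=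
  if t < 1 then 0
  else if t < 4 then 2 * Real.log t / t ^ 2
  else 2 * Real.log t / t ^ 2 - 4 / t ^ 2 * artanh (Real.sqrt (1 - 4 / t))

open Set Filter Real Topology

lemma hallPdf_of_Ico {x : ℝ} (h1 : 1 ≤ x) (h4 : x < 4) :
    hallPdf x = 2 * Real.log x / x ^ 2 := by
  simp [hallPdf, not_lt.2 h1, h4]

lemma hallPdf_of_le_one {x : ℝ} (hx : x ≤ 1) : hallPdf x = 0 := by
  rcases lt_or_eq_of_le hx with h | h
  · simp [hallPdf, h]
  · subst h; rw [hallPdf_of_Ico le_rfl (by norm_num)]; simp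

lemma artanh_zero : _root_.artanh 0 = 0 := by simp [_root_.artanh]

lemma hallPdf_of_le {x : ℝ} (h4 : 4 ≤ x) :
    hallPdf x = 2 * Real.log x / x ^ 2 - 4 / x ^ 2 * _root_.artanh (Real.sqrt (1 - 4 / x)) := by
  have h1 : ¬ x < 1 := by linarith
  simp [hallPdf, h1, not_lt.2 h4]

lemma hallPdf_four : hallPdf 4 = 2 * Real.log 4 / 4 ^ 2 := by
  rw [hallPdf_of_le le_rfl]
  norm_num [_root_.artanh_zero]

lemma artanh_diff {y : ℝ} (h1 : -1 < y) (h2 : y < 1) : DifferentiableAt ℝ _root_.artanh y := by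
  have hden : (1 : ℝ) - y ≠ 0 := by linarith
  have hval : (1 + y) / (1 - y) ≠ 0 := by
    have : (0:ℝ) < (1 + y) / (1 - y) := by
      apply div_pos <;> linarith
    exact this.ne'
  apply DifferentiableAt.const_mul
  exact (Real.differentiableAt_log hval).comp y
    (((differentiableAt_const _).add differentiableAt_id).div
      ((differentiableAt_const _).sub differentiableAt_id) hden)

/-- `hallPdf` is differentiable away from 1 and 4. -/
lemma hallPdf_diff {x : ℝ} (h1 : x ≠ 1) (h4 : x ≠ 4) : DifferentiableAt ℝ hallPdf x := by
  rcases lt_trichotomy x 1 with hx | hx | hx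
  · have : hallPdf =ᶠ[𝓝 x] fun _ => 0 := by
      filter_upwards [Iio_mem_nhds hx] with y hy
      exact hallPdf_of_le_one (le_of_lt hy)
    exact (differentiableAt_const 0).congr_of_eventuallyEq this
  · exact absurd hx h1
  rcases lt_trichotomy x 4 with hx4 | hx4 | hx4
  · have : hallPdf =ᶠ[𝓝 x] fun y => 2 * Real.log y / y ^ 2 := by
      filter_upwards [Ioo_mem_nhds hx hx4] with y hy
      exact hallPdf_of_Ico hy.1.le hy.2
    have hd : DifferentiableAt ℝ (fun y : ℝ => 2 * Real.log y / y ^ 2) x := by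
      apply DifferentiableAt.div
      · exact (Real.differentiableAt_log (by linarith)).const_mul 2
      · exact differentiableAt_pow 2
      · positivity
    exact hd.congr_of_eventuallyEq this
  · exact absurd hx4 h4
  · have hx0 : (0:ℝ) < x := by linarith
    have : hallPdf =ᶠ[𝓝 x] fun y =>
        2 * Real.log y / y ^ 2 - 4 / y ^ 2 * _root_.artanh (Real.sqrt (1 - 4 / y)) := by
      filter_upwards [Ioi_mem_nhds hx4] with y hy
      exact hallPdf_of_le (le_of_lt hy)
    have harg : (0:ℝ) < 1 - 4 / x := by
      rw [sub_pos, div_lt_one hx0]; exact hx4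
    have hlt1 : Real.sqrt (1 - 4 / x) < 1 := by
      have h4x : 0 < 4 / x := by positivity
      have := Real.sqrt_lt_sqrt harg.le (show 1 - 4/x < 1 by linarith)
      simpa using this
    have hd : DifferentiableAt ℝ
        (fun y : ℝ => 2 * Real.log y / y ^ 2 - 4 / y ^ 2 * _root_.artanh (Real.sqrt (1 - 4 / y))) x := by
      have hinner : DifferentiableAt ℝ (fun y : ℝ => 1 - 4 / y) x :=
        (differentiableAt_const _).sub ((differentiableAt_const _).div differentiableAt_id hx0.ne')
      have hsqrt : DifferentiableAt ℝ (fun y : ℝ => Real.sqrt (1 - 4 / y)) x :=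
        hinner.sqrt harg.ne'
      have hart : DifferentiableAt ℝ (fun y : ℝ => _root_.artanh (Real.sqrt (1 - 4 / y))) x := by
        have hge : (-1:ℝ) < Real.sqrt (1 - 4 / x) := by
          have := Real.sqrt_nonneg (1 - 4 / x); linarith
        exact (artanh_diff hge hlt1).comp (g := _root_.artanh) (f := fun y : ℝ => Real.sqrt (1 - 4 / y)) x hsqrt
      apply DifferentiableAt.sub
      · exact ((Real.differentiableAt_log hx0.ne').const_mul 2).div (differentiableAt_pow 2)
          (by positivity)
      · exact (((differentiableAt_const _).div (differentiableAt_pow 2) (by positivity))).mul hart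
    exact hd.congr_of_eventuallyEq this

lemma artanh_ge {u : ℝ} (h0 : 0 ≤ u) (h1 : u < 1) : u / 2 ≤ _root_.artanh u := by
  have hden : (0:ℝ) < 1 - u := by linarith
  have hlog1 : 0 ≤ Real.log (1 + u) := Real.log_nonneg (by linarith)
  have hlog2 : u ≤ -Real.log (1 - u) := by
    have h := Real.add_one_le_exp (-u)
    have : Real.log (1 - u) ≤ -u := by
      calc Real.log (1 - u) ≤ Real.log (Real.exp (-u)) :=
            Real.log_le_log hden (by linarith)
        _ = -u := Real.log_exp _
    linarith
  have : _root_.artanh u = (1/2) * (Real.log (1 + u) - Real.log (1 - u)) := by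
    rw [_root_.artanh, Real.log_div (by linarith) hden.ne']
  rw [this]; linarith

lemma hasDerivAt_g : HasDerivAt (fun x : ℝ => 2 * Real.log x / x ^ 2) 2 1 := by
  have h1 : HasDerivAt (fun x : ℝ => 2 * Real.log x) (2 * (1:ℝ)⁻¹) 1 :=
    (Real.hasDerivAt_log one_ne_zero).const_mul 2
  have h2 : HasDerivAt (fun x : ℝ => x ^ 2) (2 * 1 ^ 1) 1 := hasDerivAt_pow 2 1
  have := h1.fun_div h2 (by norm_num)
  exact this.congr_deriv (by norm_num)

/-- The right slope of `hallPdf` at 4 blows up to `-∞`. -/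
lemma slope_blowup : Tendsto (slope hallPdf 4) (𝓝[>] (4:ℝ)) atBot := by
  set g : ℝ → ℝ := fun x => 2 * Real.log x / x ^ 2 with hg
  set r : ℝ → ℝ := fun x => (4 / x ^ 2 * _root_.artanh (Real.sqrt (1 - 4 / x))) / (x - 4) with hr
  have heq : ∀ᶠ x in 𝓝[>] (4:ℝ), slope hallPdf 4 x = slope g 4 x - r x := by
    filter_upwards [self_mem_nhdsWithin] with x (hx : 4 < x)
    have hne : x - 4 ≠ 0 := by linarith
    rw [slope_def_field, slope_def_field, hallPdf_of_le hx.le, hallPdf_four,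
      show 2 * Real.log x / x ^ 2 - 4 / x ^ 2 * _root_.artanh (Real.sqrt (1 - 4 / x))
          - 2 * Real.log 4 / 4 ^ 2
        = (g x - g 4) - 4 / x ^ 2 * _root_.artanh (Real.sqrt (1 - 4 / x)) by simp only [hg]; ring,
      sub_div]
  have hgd : DifferentiableAt ℝ g 4 := by
    apply DifferentiableAt.div
    · exact (Real.differentiableAt_log (by norm_num)).const_mul 2
    · exact differentiableAt_pow 2
    · norm_num
  have hslopeg : Tendsto (slope g 4) (𝓝[>] (4:ℝ)) (𝓝 (deriv g 4)) := by
    have := hasDerivAt_iff_tendsto_slope.1 hgd.hasDerivAt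
    exact this.mono_left (nhdsWithin_mono 4 (fun y hy => ne_of_gt hy))
  have hφ : Tendsto (fun x : ℝ => (1/30) * (Real.sqrt (x - 4))⁻¹) (𝓝[>] (4:ℝ)) atTop := by
    apply Tendsto.const_mul_atTop (by norm_num : (0:ℝ) < 1/30)
    apply tendsto_inv_nhdsGT_zero.comp
    rw [tendsto_nhdsWithin_iff]
    constructor
    · have : ContinuousAt (fun x : ℝ => Real.sqrt (x - 4)) 4 :=
        (Real.continuous_sqrt.comp (continuous_id.sub continuous_const)).continuousAt
      have h0 : Real.sqrt ((4:ℝ) - 4) = 0 := by norm_num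
      exact (this.tendsto.mono_left nhdsWithin_le_nhds).congr' (by rfl) |>.congr (fun _ => rfl)
        |>.mono_right (by rw [h0])
    · filter_upwards [self_mem_nhdsWithin] with x (hx : 4 < x)
      exact Real.sqrt_pos.2 (by linarith)
  have hrbound : ∀ᶠ x in 𝓝[>] (4:ℝ), (1/30) * (Real.sqrt (x - 4))⁻¹ ≤ r x := by
    filter_upwards [self_mem_nhdsWithin, Ioo_mem_nhdsGT_of_mem (by norm_num : (4:ℝ) ∈ Ico 4 5)]
      with x (hx : 4 < x) hx5
    have hx5' : x < 5 := hx5.2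
    have hx0 : (0:ℝ) < x := by linarith
    set a := Real.sqrt (x - 4) with ha
    set b := Real.sqrt x with hb
    have ha0 : 0 < a := Real.sqrt_pos.2 (by linarith)
    have hb0 : 0 < b := Real.sqrt_pos.2 hx0
    have ha2 : a ^ 2 = x - 4 := Real.sq_sqrt (by linarith)
    have hb2 : b ^ 2 = x := Real.sq_sqrt hx0.le
    have huval : Real.sqrt (1 - 4 / x) = a / b := by
      rw [show 1 - 4 / x = (x - 4) / x by field_simp, Real.sqrt_div (by linarith : (0:ℝ) ≤ x - 4)]
    have hu0 : 0 ≤ a / b := by positivity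
    have hu1 : a / b < 1 := by
      rw [div_lt_one hb0]
      have : a ^ 2 < b ^ 2 := by rw [ha2, hb2]; linarith
      nlinarith
    have hart : a / b / 2 ≤ _root_.artanh (Real.sqrt (1 - 4 / x)) := by
      rw [huval]; exact artanh_ge hu0 hu1
    have hx2 : (0:ℝ) < 4 / x ^ 2 := by positivity
    have hstep : 4 / x ^ 2 * (a / b / 2) / (x - 4) ≤ r x := by
      simp only [hr]
      gcongr
    refine le_trans ?_ hstep
    rw [← ha2, ← hb2]
    have hb5 : b ^ 2 ≤ 5 := by rw [hb2]; linarith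
    have hb24 : b ≤ 12/5 := by nlinarith
    have hbp4 : b ^ 4 ≤ 25 := by nlinarith
    have key : b ^ 5 ≤ 60 := by
      nlinarith [mul_le_mul hbp4 hb24 hb0.le (by norm_num : (0:ℝ) ≤ 25)]
    rw [show (4:ℝ) / (b ^ 2) ^ 2 * (a / b / 2) / a ^ 2 = 2 / (b ^ 5 * a) by
      field_simp; ring]
    rw [show (1:ℝ) / 30 * a⁻¹ = 2 / (60 * a) by field_simp; ring]
    gcongr
  have hr_top : Tendsto r (𝓝[>] (4:ℝ)) atTop :=
    tendsto_atTop_mono' _ hrbound hφ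
  have : Tendsto (fun x => slope g 4 x - r x) (𝓝[>] (4:ℝ)) atBot := by
    apply Filter.Tendsto.add_atBot hslopeg
    exact tendsto_neg_atTop_atBot.comp hr_top
  exact this.congr' (heq.mono fun x h => h.symm)

lemma hallPdf_right_deriv : HasDerivWithinAt hallPdf 2 (Ici 1) 1 := by
  apply (hasDerivAt_g.hasDerivWithinAt (s := Ici 1)).congr_of_eventuallyEq
  · filter_upwards [self_mem_nhdsWithin,
      mem_nhdsWithin_of_mem_nhds (Iio_mem_nhds (by norm_num : (1:ℝ) < 4))]
      with y (hy1 : 1 ≤ y) (hy4 : y < 4)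
    exact hallPdf_of_Ico hy1 hy4
  · rw [hallPdf_of_Ico le_rfl (by norm_num)]

lemma hallPdf_left_deriv : HasDerivWithinAt hallPdf 0 (Iic 1) 1 := by
  apply (hasDerivWithinAt_const (1:ℝ) (Iic 1) (0:ℝ)).congr_of_eventuallyEq
  · filter_upwards [self_mem_nhdsWithin] with y (hy : y ≤ 1)
    exact hallPdf_of_le_one hy
  · exact hallPdf_of_le_one le_rfl

lemma tendsto_sum_atBot {ι : Type*} {s : Finset ι} (hs : s.Nonempty) {f : ι → ℝ → ℝ}
    {l : Filter ℝ} (h : ∀ i ∈ s, Tendsto (f i) l atBot) :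
    Tendsto (fun x => ∑ i ∈ s, f i x) l atBot := by
  induction hs using Finset.Nonempty.cons_induction with
  | singleton i => simpa using h i (by simp)
  | cons i s his hs ih =>
    simp only [Finset.sum_cons]
    exact Tendsto.atBot_add_atBot (h i (by simp)) (ih fun j hj => h j (by simp [hj]))

/-- right derivative of a scaled term at its own scale point -/
lemma term_right_deriv {p a : ℝ} (hp : 0 < p) :
    HasDerivWithinAt (fun s => a * hallPdf (s / p)) (a * (2 * (1/p))) (Ici p) p := by
  have hinner : HasDerivWithinAt (fun s : ℝ => s / p) (1/p) (Ici p) p := by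
    simpa using ((hasDerivAt_id p).div_const p).hasDerivWithinAt (s := Ici p)
  have hmap : MapsTo (fun s : ℝ => s / p) (Ici p) (Ici 1) := fun s hs => by
    rw [mem_Ici, le_div_iff₀ hp, one_mul]; exact hs
  have h1 : p / p = 1 := div_self hp.ne'
  have houter : HasDerivWithinAt hallPdf 2 (Ici 1) (p / p) := h1 ▸ hallPdf_right_deriv
  exact (HasDerivWithinAt.comp (h := fun s : ℝ => s / p) (h₂ := hallPdf) p houter hinner hmap).const_mul a

lemma term_left_deriv {p a : ℝ} (hp : 0 < p) :
    HasDerivWithinAt (fun s => a * hallPdf (s / p)) 0 (Iic p) p := by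
  have hinner : HasDerivWithinAt (fun s : ℝ => s / p) (1/p) (Iic p) p := by
    simpa using ((hasDerivAt_id p).div_const p).hasDerivWithinAt (s := Iic p)
  have hmap : MapsTo (fun s : ℝ => s / p) (Iic p) (Iic 1) := fun s hs => by
    rw [mem_Iic, div_le_one hp]; exact hs
  have h1 : p / p = 1 := div_self hp.ne'
  have houter : HasDerivWithinAt hallPdf 0 (Iic 1) (p / p) := h1 ▸ hallPdf_left_deriv
  have := (HasDerivWithinAt.comp (h := fun s : ℝ => s / p) (h₂ := hallPdf) p houter hinner
    hmap).const_mul a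
  simpa using this

/-- the slope of a term whose scale is p/4 blows up -/
lemma term_slope_atBot {c a : ℝ} (hc0 : 0 < c) (ha : 0 < a) :
    Tendsto (slope (fun s => a * hallPdf (s / c)) (4 * c)) (𝓝[>] (4 * c)) atBot := by
  set p := 4 * c with hpdef
  have hp : 0 < p := by positivity
  have h4 : p / c = 4 := by rw [hpdef]; field_simp
  have hkey : ∀ s, slope (fun s => a * hallPdf (s / c)) p s
      = (a / c) * slope hallPdf 4 (s / c) := by
    intro s
    by_cases hs : s = p
    · rw [hs, slope_same, h4, slope_same, mul_zero]
    · have hsp : s - p ≠ 0 := sub_ne_zero.2 hs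
      rw [slope_def_field, slope_def_field, h4]
      have hsc : s / c - 4 = (s - p) / c := by rw [← h4]; field_simp
      rw [hsc]
      field_simp
  have hmap : Tendsto (fun s => s / c) (𝓝[>] p) (𝓝[>] (4:ℝ)) := by
    rw [tendsto_nhdsWithin_iff]
    constructor
    · have : Tendsto (fun s => s / c) (𝓝 p) (𝓝 (p / c)) :=
        (continuous_id.div_const c).tendsto p
      rw [h4] at this
      exact this.mono_left nhdsWithin_le_nhds
    · filter_upwards [self_mem_nhdsWithin] with s (hs : p < s)
      rw [mem_Ioi, ← h4]
      exact (div_lt_div_iff_of_pos_right hc0).2 hs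
  have := Tendsto.const_mul_atBot (show (0:ℝ) < a / c by positivity) (slope_blowup.comp hmap)
  exact this.congr (fun s => (hkey s).symm)

lemma term_diff {p c : ℝ} (a : ℝ) (hp : 0 < p) (hc0 : 0 < c) (h1 : c ≠ p) (h4 : c ≠ p / 4) :
    DifferentiableAt ℝ (fun s => a * hallPdf (s / c)) p := by
  have hd1 : p / c ≠ 1 := by
    intro h
    rw [div_eq_one_iff_eq hc0.ne'] at h
    exact h1 h.symm
  have hd4 : p / c ≠ 4 := by
    intro h
    rw [div_eq_iff hc0.ne'] at h
    apply h4
    rw [h]; ring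
  exact ((hallPdf_diff hd1 hd4).comp p (differentiableAt_id.div_const c)).const_mul a

lemma key_nondiff (n : ℕ) (α τ : Fin n → ℝ) (hα : ∀ i, 0 < α i) (hτ : ∀ i, 0 < τ i)
    (p : ℝ) (hp : 0 < p) (hbad : ∃ i, τ i = p ∨ τ i = p / 4) :
    ¬ DifferentiableAt ℝ (fun s : ℝ => ∑ i, α i * hallPdf (s / τ i)) p := by
  intro hdiff
  set F : ℝ → ℝ := fun s => ∑ i, α i * hallPdf (s / τ i) with hF
  have hsl : ∀ s, slope F p s = ∑ i, slope (fun u => α i * hallPdf (u / τ i)) p s := by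
    intro s
    simp only [slope_def_field, hF]
    rw [← Finset.sum_sub_distrib, Finset.sum_div]
  by_cases hJ : ∃ j, τ j = p / 4
  · -- blow-up case: slope tends to -∞ from the right, contradiction
    have hslope_nhds : Tendsto (slope F p) (𝓝[>] p) (𝓝 (deriv F p)) := by
      have h := hasDerivWithinAt_iff_tendsto_slope.1
        (hdiff.hasDerivAt.hasDerivWithinAt (s := Ici p))
      exact h.mono_left (nhdsWithin_mono p (fun y hy => ⟨(le_of_lt hy : p ≤ y), ne_of_gt hy⟩))
    set J : Finset (Fin n) := Finset.univ.filter (fun i => τ i = p / 4) with hJdef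
    have hJne : J.Nonempty := by
      obtain ⟨j, hj⟩ := hJ
      exact ⟨j, by simp [hJdef, hj]⟩
    have hTB : Tendsto (fun s => ∑ i ∈ J, slope (fun u => α i * hallPdf (u / τ i)) p s)
        (𝓝[>] p) atBot := by
      apply tendsto_sum_atBot hJne
      intro i hi
      have hτi : τ i = p / 4 := by simpa [hJdef] using hi
      have h4c : 4 * τ i = p := by rw [hτi]; ring
      have h := term_slope_atBot (hτ i) (hα i)
      rw [h4c] at h
      exact h
    have hTN : ∀ i, ∃ d, τ i ≠ p / 4 →
        Tendsto (fun s => slope (fun u => α i * hallPdf (u / τ i)) p s) (𝓝[>] p) (𝓝 d) := by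
      intro i
      by_cases hi4 : τ i = p / 4
      · exact ⟨0, fun h => absurd hi4 h⟩
      by_cases hip : τ i = p
      · refine ⟨α i * (2 * (1/p)), fun _ => ?_⟩
        simp only [hip]
        have h := hasDerivWithinAt_iff_tendsto_slope.1 (term_right_deriv (a := α i) hp)
        exact h.mono_left (nhdsWithin_mono p (fun y hy => ⟨(le_of_lt hy : p ≤ y), ne_of_gt hy⟩))
      · refine ⟨deriv (fun u => α i * hallPdf (u / τ i)) p, fun _ => ?_⟩
        have h := hasDerivAt_iff_tendsto_slope.1
          (term_diff (α i) hp (hτ i) hip hi4).hasDerivAt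
        exact h.mono_left (nhdsWithin_mono p (fun y hy => ne_of_gt hy))
    choose d hd using hTN
    have hTN' : Tendsto (fun s => ∑ i ∈ Finset.univ.filter (fun i => ¬ τ i = p / 4),
        slope (fun u => α i * hallPdf (u / τ i)) p s) (𝓝[>] p)
        (𝓝 (∑ i ∈ Finset.univ.filter (fun i => ¬ τ i = p / 4), d i)) := by
      apply tendsto_finset_sum
      intro i hi
      exact hd i (by simpa using hi)
    have htot : Tendsto (slope F p) (𝓝[>] p) atBot := by
      have hsum := Filter.Tendsto.atBot_add hTB hTN'
      apply hsum.congr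
      intro s
      rw [hsl s, ← Finset.sum_filter_add_sum_filter_not Finset.univ (fun i => τ i = p / 4)]
    exact not_tendsto_nhds_of_tendsto_atBot htot _ hslope_nhds
  · -- jump case
    push_neg at hJ
    obtain ⟨i₀, hi₀⟩ := hbad
    have hi₀p : τ i₀ = p := hi₀.resolve_right (hJ i₀)
    set R : Fin n → ℝ := fun i => if τ i = p then α i * (2 * (1/p))
      else deriv (fun u => α i * hallPdf (u / τ i)) p with hR
    set L : Fin n → ℝ := fun i => if τ i = p then 0
      else deriv (fun u => α i * hallPdf (u / τ i)) p with hL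
    have hRd : HasDerivWithinAt F (∑ i, R i) (Ici p) p := by
      apply HasDerivWithinAt.fun_sum
      intro i _
      by_cases h : τ i = p
      · simp only [hR, if_pos h, h]
        exact term_right_deriv hp
      · simp only [hR, if_neg h]
        exact ((term_diff (α i) hp (hτ i) h (hJ i)).hasDerivAt).hasDerivWithinAt
    have hLd : HasDerivWithinAt F (∑ i, L i) (Iic p) p := by
      apply HasDerivWithinAt.fun_sum
      intro i _
      by_cases h : τ i = p
      · simp only [hL, if_pos h, h]
        exact term_left_deriv hp
      · simp only [hL, if_neg h]
        exact ((term_diff (α i) hp (hτ i) h (hJ i)).hasDerivAt).hasDerivWithinAt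
    have hu1 : deriv F p = ∑ i, R i :=
      UniqueDiffWithinAt.eq_deriv _ (uniqueDiffOn_Ici p p self_mem_Ici)
        (hdiff.hasDerivAt.hasDerivWithinAt) hRd
    have hu2 : deriv F p = ∑ i, L i :=
      UniqueDiffWithinAt.eq_deriv _ (uniqueDiffOn_Iic p p self_mem_Iic)
        (hdiff.hasDerivAt.hasDerivWithinAt) hLd
    have hlt : ∑ i, L i < ∑ i, R i := by
      apply Finset.sum_lt_sum
      · intro i _
        by_cases h : τ i = p
        · simp only [hR, hL, if_pos h]
          have := hα i
          positivity
        · simp only [hR, hL, if_neg h]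
          exact le_rfl
      · refine ⟨i₀, Finset.mem_univ _, ?_⟩
        simp only [hR, hL, if_pos hi₀p]
        have := hα i₀
        positivity
    rw [hu1] at hu2
    linarith

/-- If a finite positive combination of scaled Hall distributions is not differentiable at a
point `τ > 0`, then it is not differentiable at `τ/4` or at `4τ`. -/
theorem hall_sum_nonsmooth_propagates (n : ℕ) (hn : 1 ≤ n) (α τ : Fin n → ℝ)
    (hα : ∀ i, 0 < α i) (hτ : ∀ i, 0 < τ i) (t : ℝ) (ht : 0 < t)
    (hnd : ¬ DifferentiableAt ℝ (fun s : ℝ => ∑ i, α i * hallPdf (s / τ i)) t) :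
    ¬ DifferentiableAt ℝ (fun s : ℝ => ∑ i, α i * hallPdf (s / τ i)) (t / 4) ∨
    ¬ DifferentiableAt ℝ (fun s : ℝ => ∑ i, α i * hallPdf (s / τ i)) (4 * t) := by
  have hbad : ∃ i, τ i = t ∨ τ i = t / 4 := by
    by_contra hno
    push_neg at hno
    apply hnd
    apply DifferentiableAt.fun_sum
    intro i _
    exact term_diff (α i) ht (hτ i) (hno i).1 (hno i).2
  obtain ⟨i, hi | hi⟩ := hbad
  · right
    exact key_nondiff n α τ hα hτ (4 * t) (by positivity)
      ⟨i, Or.inr (by rw [hi]; ring)⟩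
  · left
    exact key_nondiff n α τ hα hτ (t / 4) (by positivity) ⟨i, Or.inl hi⟩
end

section
/- The Hall distribution pdf integrates to one: ∫₀^∞ h(t) dt = 1. -/
open Real hiding artanh artanh_zero
open Set MeasureTheory


noncomputable def hallG (t : ℝ) : ℝ := -2 * Real.log t / t - 2 / t

lemma hasDerivAt_hallG {t : ℝ} (ht : 0 < t) :
    HasDerivAt hallG (2 * Real.log t / t ^ 2) t := by
  have h1 : HasDerivAt (fun t : ℝ => -2 * Real.log t / t - 2 / t)
      ((-2 * t⁻¹ * t - (-2 * Real.log t) * 1) / t ^ 2 - (0 * t - 2 * 1) / t ^ 2) t := by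
    exact (((hasDerivAt_log ht.ne').const_mul (-2)).div (hasDerivAt_id t) ht.ne').sub
      ((hasDerivAt_const t 2).div (hasDerivAt_id t) ht.ne')
  convert h1 using 1
  · rfl
  field_simp
  ring

lemma hasDerivAt_artanh {x : ℝ} (h1 : -1 < x) (h2 : x < 1) :
    HasDerivAt artanh (1 / (1 - x ^ 2)) x := by
  have hx1 : (0:ℝ) < 1 + x := by linarith
  have hx2 : (0:ℝ) < 1 - x := by linarith
  have hd : HasDerivAt (fun x : ℝ => (1 + x) / (1 - x))
      ((1 * (1 - x) - (1 + x) * (-1)) / (1 - x) ^ 2) x := by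
    exact (((hasDerivAt_id x).const_add 1).div ((hasDerivAt_id x).neg.const_add 1) hx2.ne')
  have hq : (1 + x) / (1 - x) ≠ 0 := by positivity
  have := (hd.log hq).const_mul (1/2 : ℝ)
  refine this.congr_deriv ?_
  have h3 : (1:ℝ) - x ^ 2 ≠ 0 := by nlinarith
  field_simp
  ring

noncomputable def hallH (t : ℝ) : ℝ :=
  -2 * Real.log t / t - 2 / t - Real.sqrt (1 - 4 / t)
    + 4 / t * artanh (Real.sqrt (1 - 4 / t))

lemma sqrt_lt_one' {t : ℝ} (ht : 4 < t) : Real.sqrt (1 - 4 / t) < 1 := by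
  have h0 : (0:ℝ) < t := by linarith
  have : (1:ℝ) - 4 / t < 1 := by
    have : 0 < 4 / t := by positivity
    linarith
  calc Real.sqrt (1 - 4 / t) < Real.sqrt 1 := by
        apply Real.sqrt_lt_sqrt ?_ this
        · have h4 : 4 / t < 1 := (div_lt_one h0).mpr ht
          linarith
    _ = 1 := Real.sqrt_one

lemma hasDerivAt_artanh_sqrt {t : ℝ} (ht : 4 < t) :
    HasDerivAt (fun t : ℝ => artanh (Real.sqrt (1 - 4 / t)))
      (1 / (2 * t * Real.sqrt (1 - 4 / t))) t := by
  have h0 : (0:ℝ) < t := by linarith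
  have h4 : 4 / t < 1 := (div_lt_one h0).mpr ht
  have hu : (0:ℝ) < 1 - 4 / t := by linarith
  set s := Real.sqrt (1 - 4 / t) with hs
  have hspos : 0 < s := Real.sqrt_pos.mpr hu
  have hs1 : s < 1 := sqrt_lt_one' ht
  have hsq : s ^ 2 = 1 - 4 / t := Real.sq_sqrt hu.le
  have hinner : HasDerivAt (fun t : ℝ => 1 - 4 / t)
      (-((0 * t - 4 * 1) / t ^ 2)) t :=
    ((hasDerivAt_const t 4).div (hasDerivAt_id t) h0.ne').const_sub 1
  have hsqrt : HasDerivAt (fun t : ℝ => Real.sqrt (1 - 4 / t))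
      (1 / (2 * Real.sqrt (1 - 4 / t)) * (-((0 * t - 4 * 1) / t ^ 2))) t :=
    (Real.hasDerivAt_sqrt hu.ne').comp t hinner
  have hat : HasDerivAt (fun t : ℝ => artanh (Real.sqrt (1 - 4 / t)))
      (1 / (1 - s ^ 2) * (1 / (2 * Real.sqrt (1 - 4 / t)) * (-((0 * t - 4 * 1) / t ^ 2)))) t :=
    (hasDerivAt_artanh (by linarith) hs1).comp (h := fun t : ℝ => Real.sqrt (1 - 4 / t)) t hsqrt
  convert hat using 1
  rw [hsq, ← hs]
  have : (1:ℝ) - (1 - 4 / t) = 4 / t := by ring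
  rw [this]
  field_simp
  ring

lemma hasDerivAt_hallH {t : ℝ} (ht : 4 < t) :
    HasDerivAt hallH
      (2 * Real.log t / t ^ 2 - 4 / t ^ 2 * artanh (Real.sqrt (1 - 4 / t))) t := by
  have h0 : (0:ℝ) < t := by linarith
  have h4 : 4 / t < 1 := (div_lt_one h0).mpr ht
  have hu : (0:ℝ) < 1 - 4 / t := by linarith
  have hspos : 0 < Real.sqrt (1 - 4 / t) := Real.sqrt_pos.mpr hu
  have hinner : HasDerivAt (fun t : ℝ => 1 - 4 / t)
      (-((0 * t - 4 * 1) / t ^ 2)) t :=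
    ((hasDerivAt_const t 4).div (hasDerivAt_id t) h0.ne').const_sub 1
  have hsqrt : HasDerivAt (fun t : ℝ => Real.sqrt (1 - 4 / t))
      (1 / (2 * Real.sqrt (1 - 4 / t)) * (-((0 * t - 4 * 1) / t ^ 2))) t :=
    (Real.hasDerivAt_sqrt hu.ne').comp t hinner
  have hG := hasDerivAt_hallG h0
  have h4t : HasDerivAt (fun t : ℝ => 4 / t) ((0 * t - 4 * 1) / t ^ 2) t :=
    (hasDerivAt_const t 4).div (hasDerivAt_id t) h0.ne'
  have hlast := h4t.mul (hasDerivAt_artanh_sqrt ht)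
  have : HasDerivAt hallH
      (2 * Real.log t / t ^ 2 - 1 / (2 * Real.sqrt (1 - 4 / t)) * (-((0 * t - 4 * 1) / t ^ 2))
        + ((0 * t - 4 * 1) / t ^ 2 * artanh (Real.sqrt (1 - 4 / t))
          + 4 / t * (1 / (2 * t * Real.sqrt (1 - 4 / t))))) t := by
    exact (hG.sub hsqrt).add hlast
  convert this using 1
  have hs : Real.sqrt (1 - 4 / t) ≠ 0 := hspos.ne'
  field_simp
  ring

lemma artanh_sqrt_nonneg {t : ℝ} (ht : 4 ≤ t) : 0 ≤ artanh (Real.sqrt (1 - 4 / t)) := by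
  have h0 : (0:ℝ) < t := by linarith
  have h4 : 4 / t ≤ 1 := (div_le_one h0).mpr ht
  have hu : (0:ℝ) ≤ 1 - 4 / t := by linarith
  set s := Real.sqrt (1 - 4 / t) with hs
  have hs0 : 0 ≤ s := Real.sqrt_nonneg _
  have hsq : s ^ 2 = 1 - 4 / t := Real.sq_sqrt hu
  have hs1 : s < 1 := by nlinarith [div_pos (by norm_num : (0:ℝ) < 4) h0]
  have : (1:ℝ) ≤ (1 + s) / (1 - s) := (one_le_div (by linarith)).mpr (by linarith)
  have := Real.log_nonneg this
  unfold artanh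
  positivity

lemma artanh_sqrt_le {t : ℝ} (ht : 4 ≤ t) :
    artanh (Real.sqrt (1 - 4 / t)) ≤ Real.log t / 2 := by
  have h0 : (0:ℝ) < t := by linarith
  have h4 : 4 / t ≤ 1 := (div_le_one h0).mpr ht
  have hu : (0:ℝ) ≤ 1 - 4 / t := by linarith
  set s := Real.sqrt (1 - 4 / t) with hs
  have hs0 : 0 ≤ s := Real.sqrt_nonneg _
  have hsq : s ^ 2 = 1 - 4 / t := Real.sq_sqrt hu
  have hs1 : s < 1 := by nlinarith [div_pos (by norm_num : (0:ℝ) < 4) h0]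
  have hts : t * (1 - s ^ 2) = 4 := by rw [hsq]; field_simp; ring
  have key : (1 + s) / (1 - s) ≤ t := by
    rw [div_le_iff₀ (by linarith)]
    nlinarith [hts, hs0, hs1]
  have hpos : (0:ℝ) < (1 + s) / (1 - s) := div_pos (by linarith) (by linarith)
  have := Real.log_le_log hpos key
  unfold artanh
  linarith

lemma two_log_div_le {t : ℝ} (ht : 1 ≤ t) :
    2 * Real.log t / t ^ 2 ≤ 4 * t ^ (-(3/2) : ℝ) := by
  have h0 : (0:ℝ) < t := by linarith
  have hlog : Real.log t ≤ 2 * Real.sqrt t := by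
    have h1 : Real.log t = 2 * Real.log (Real.sqrt t) := by
      rw [Real.log_sqrt h0.le]; ring
    have h2 : Real.log (Real.sqrt t) ≤ Real.sqrt t - 1 :=
      Real.log_le_sub_one_of_pos (Real.sqrt_pos.mpr h0)
    nlinarith [Real.sqrt_nonneg t]
  have h32 : t ^ (-(3/2) : ℝ) = Real.sqrt t / t ^ 2 := by
    rw [Real.sqrt_eq_rpow, ← Real.rpow_natCast t 2, ← Real.rpow_sub h0]
    norm_num
  have ht2 : (0:ℝ) < t ^ 2 := by positivity
  calc 2 * Real.log t / t ^ 2 ≤ 4 * Real.sqrt t / t ^ 2 := by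
        exact (div_le_div_iff_of_pos_right ht2).mpr (by linarith)
    _ = 4 * t ^ (-(3/2) : ℝ) := by rw [h32]; ring

lemma measurable_hallPdf : Measurable hallPdf := by
  unfold hallPdf artanh
  have hsqrt : Measurable fun t : ℝ => Real.sqrt (1 - 4 / t) :=
    Real.continuous_sqrt.measurable.comp ((measurable_const.div measurable_id).const_sub 1)
  have hlog : Measurable fun t : ℝ => 2 * Real.log t / t ^ 2 :=
    (Real.measurable_log.const_mul 2).div (measurable_id.pow_const 2)
  have hart : Measurable fun t : ℝ =>
      (1/2 : ℝ) * Real.log ((1 + Real.sqrt (1 - 4/t)) / (1 - Real.sqrt (1 - 4/t))) :=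
    (Real.measurable_log.comp ((hsqrt.const_add 1).div (hsqrt.const_sub 1))).const_mul (1/2)
  refine Measurable.ite (measurableSet_lt measurable_id measurable_const) measurable_const ?_
  refine Measurable.ite (measurableSet_lt measurable_id measurable_const) hlog ?_
  exact hlog.sub ((measurable_const.div (measurable_id.pow_const 2)).mul hart)

lemma artanh_zero_s7 : artanh 0 = 0 := by
  unfold artanh; norm_num

lemma hallPdf_eq_mid {t : ℝ} (h1 : 1 ≤ t) (h4 : t ≤ 4) :
    hallPdf t = 2 * Real.log t / t ^ 2 := by
  unfold hallPdf
  rw [if_neg (not_lt.mpr h1)]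
  rcases lt_or_eq_of_le h4 with h | h
  · rw [if_pos h]
  · rw [if_neg (by rw [h]; exact lt_irrefl 4), h]
    norm_num [artanh_zero_s7]

lemma hallPdf_eq_top {t : ℝ} (h4 : 4 ≤ t) :
    hallPdf t = 2 * Real.log t / t ^ 2 - 4 / t ^ 2 * artanh (Real.sqrt (1 - 4 / t)) := by
  unfold hallPdf
  rw [if_neg (not_lt.mpr (by linarith)), if_neg (not_lt.mpr h4)]

lemma hallPdf_nonneg (t : ℝ) : 0 ≤ hallPdf t := by
  unfold hallPdf
  split_ifs with h1 h4
  · exact le_refl _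
  · have : (0:ℝ) ≤ Real.log t := Real.log_nonneg (not_lt.mp h1)
    positivity
  · push_neg at h1 h4
    have h0 : (0:ℝ) < t := by linarith
    have hle := artanh_sqrt_le h4
    have ht2 : (0:ℝ) < t ^ 2 := by positivity
    have : 4 / t ^ 2 * artanh (Real.sqrt (1 - 4 / t)) ≤ 4 / t ^ 2 * (Real.log t / 2) :=
      mul_le_mul_of_nonneg_left hle (by positivity)
    have heq : 4 / t ^ 2 * (Real.log t / 2) = 2 * Real.log t / t ^ 2 := by ring
    linarith [heq ▸ this]

lemma hallPdf_le {t : ℝ} (h1 : 1 ≤ t) : hallPdf t ≤ 2 * Real.log t / t ^ 2 := by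
  rcases le_or_gt t 4 with h4 | h4
  · rw [hallPdf_eq_mid h1 h4]
  · rw [hallPdf_eq_top h4.le]
    have h0 : (0:ℝ) < t := by linarith
    have := artanh_sqrt_nonneg h4.le
    have : 0 ≤ 4 / t ^ 2 * artanh (Real.sqrt (1 - 4 / t)) := by positivity
    linarith

lemma integrableOn_hallPdf_Ioi_one : IntegrableOn hallPdf (Ioi 1) := by
  have hg : IntegrableOn (fun t : ℝ => 4 * t ^ (-(3/2) : ℝ)) (Ioi 1) :=
    ((integrableOn_Ioi_rpow_iff one_pos).mpr (by norm_num)).const_mul 4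
  apply hg.mono' (measurable_hallPdf.aestronglyMeasurable.restrict)
  filter_upwards [ae_restrict_mem measurableSet_Ioi] with t ht
  have h1 : (1:ℝ) ≤ t := le_of_lt ht
  rw [Real.norm_eq_abs, abs_of_nonneg (hallPdf_nonneg t)]
  exact (hallPdf_le h1).trans (two_log_div_le h1)

lemma tendsto_hallH : Filter.Tendsto hallH Filter.atTop (nhds (-1)) := by
  have hlog : Filter.Tendsto (fun t : ℝ => Real.log t / t) Filter.atTop (nhds 0) :=
    Real.isLittleO_log_id_atTop.tendsto_div_nhds_zero
  have hinv : Filter.Tendsto (fun t : ℝ => 2 / t) Filter.atTop (nhds 0) :=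
    tendsto_const_nhds.div_atTop Filter.tendsto_id
  have h4t : Filter.Tendsto (fun t : ℝ => 4 / t) Filter.atTop (nhds 0) :=
    tendsto_const_nhds.div_atTop Filter.tendsto_id
  have hsq : Filter.Tendsto (fun t : ℝ => Real.sqrt (1 - 4 / t)) Filter.atTop (nhds 1) := by
    have h1 : Filter.Tendsto (fun t : ℝ => 1 - 4 / t) Filter.atTop (nhds 1) := by
      simpa using tendsto_const_nhds.sub h4t
    have := (Real.continuous_sqrt.tendsto 1).comp h1
    simpa [Function.comp_def] using this
  have hart : Filter.Tendsto (fun t : ℝ => 4 / t * artanh (Real.sqrt (1 - 4 / t)))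
      Filter.atTop (nhds 0) := by
    apply squeeze_zero' ?_ ?_ (g := fun t : ℝ => 2 * (Real.log t / t)) ?_
    · filter_upwards [Filter.eventually_ge_atTop (4:ℝ)] with t ht
      have h0 : (0:ℝ) < t := by linarith
      exact mul_nonneg (by positivity) (artanh_sqrt_nonneg ht)
    · filter_upwards [Filter.eventually_ge_atTop (4:ℝ)] with t ht
      have h0 : (0:ℝ) < t := by linarith
      calc 4 / t * artanh (Real.sqrt (1 - 4 / t)) ≤ 4 / t * (Real.log t / 2) :=
            mul_le_mul_of_nonneg_left (artanh_sqrt_le ht) (by positivity)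
        _ = 2 * (Real.log t / t) := by ring
    · simpa using hlog.const_mul 2
  have h := (((hlog.const_mul (-2)).sub hinv).sub hsq).add hart
  have heq : ∀ t : ℝ, -2 * (Real.log t / t) - 2 / t - Real.sqrt (1 - 4 / t)
      + 4 / t * artanh (Real.sqrt (1 - 4 / t)) = hallH t := by
    intro t; unfold hallH; ring
  have h' := h.congr heq
  convert h' using 2
  norm_num

lemma continuousAt_hallH : ContinuousAt hallH 4 := by
  unfold hallH artanh
  have h40 : (4:ℝ) ≠ 0 := by norm_num
  have hs : ContinuousAt (fun t : ℝ => Real.sqrt (1 - 4 / t)) 4 :=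
    Real.continuous_sqrt.continuousAt.comp
      (continuousAt_const.sub (continuousAt_const.div continuousAt_id h40))
  have hsval : Real.sqrt (1 - 4 / (4:ℝ)) = 0 := by norm_num
  have hden : (1:ℝ) - Real.sqrt (1 - 4 / (4:ℝ)) ≠ 0 := by rw [hsval]; norm_num
  have hq : ContinuousAt (fun t : ℝ => (1 + Real.sqrt (1 - 4 / t)) / (1 - Real.sqrt (1 - 4 / t))) 4 :=
    (continuousAt_const.add hs).div (continuousAt_const.sub hs) hden
  have hqval : (1 + Real.sqrt (1 - 4 / (4:ℝ))) / (1 - Real.sqrt (1 - 4 / (4:ℝ))) ≠ 0 := by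
    rw [hsval]; norm_num
  have hlog : ContinuousAt (fun t : ℝ =>
      (1/2 : ℝ) * Real.log ((1 + Real.sqrt (1 - 4 / t)) / (1 - Real.sqrt (1 - 4 / t)))) 4 :=
    (hq.log (by simpa using hqval)).const_mul _
  have h1 : ContinuousAt (fun t : ℝ => -2 * Real.log t / t) 4 :=
    ((Real.continuousAt_log h40).const_mul (-2)).div continuousAt_id h40
  have h2 : ContinuousAt (fun t : ℝ => 2 / t) 4 := continuousAt_const.div continuousAt_id h40
  have h3 : ContinuousAt (fun t : ℝ => 4 / t) 4 := continuousAt_const.div continuousAt_id h40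
  exact ((h1.sub h2).sub hs).add (h3.mul hlog)

open MeasureTheory in
/-- The Hall pdf integrates to one over `(0, ∞)`. -/
theorem hall_integral_eq_one : ∫ t in Set.Ioi (0 : ℝ), hallPdf t = 1 := by
  have i1 : IntegrableOn hallPdf (Ioi 1) := integrableOn_hallPdf_Ioi_one
  have i4 : IntegrableOn hallPdf (Ioi 4) := i1.mono_set (Ioi_subset_Ioi (by norm_num))
  have i14 : IntegrableOn hallPdf (Ioc 1 4) := i1.mono_set Ioc_subset_Ioi_self
  have h01 : ∀ t ∈ Ioc (0:ℝ) 1, hallPdf t = 0 := by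
    intro t ht
    rcases lt_or_eq_of_le ht.2 with h | h
    · unfold hallPdf; rw [if_pos h]
    · rw [h, hallPdf_eq_mid le_rfl (by norm_num)]
      simp
  have i01 : IntegrableOn hallPdf (Ioc 0 1) :=
    (integrableOn_congr_fun h01 measurableSet_Ioc).mpr (integrableOn_zero)
  have hsplit1 : Ioc (0:ℝ) 1 ∪ Ioi 1 = Ioi 0 := Ioc_union_Ioi_eq_Ioi zero_le_one
  have hsplit2 : Ioc (1:ℝ) 4 ∪ Ioi 4 = Ioi 1 := Ioc_union_Ioi_eq_Ioi (by norm_num)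
  have e01 : ∫ t in Ioc (0:ℝ) 1, hallPdf t = 0 := by
    rw [setIntegral_congr_fun measurableSet_Ioc h01]; simp
  have e14 : ∫ t in Ioc (1:ℝ) 4, hallPdf t = hallG 4 - hallG 1 := by
    have hmid : ∀ t ∈ Ioc (1:ℝ) 4, hallPdf t = 2 * Real.log t / t ^ 2 := fun t ht =>
      hallPdf_eq_mid ht.1.le ht.2
    rw [setIntegral_congr_fun measurableSet_Ioc hmid,
      ← intervalIntegral.integral_of_le (by norm_num : (1:ℝ) ≤ 4)]
    apply intervalIntegral.integral_eq_sub_of_hasDerivAt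
    · intro t ht
      rw [Set.uIcc_of_le (by norm_num : (1:ℝ) ≤ 4)] at ht
      exact hasDerivAt_hallG (by linarith [ht.1])
    · apply ContinuousOn.intervalIntegrable
      rw [Set.uIcc_of_le (by norm_num : (1:ℝ) ≤ 4)]
      apply ContinuousOn.div
      · exact continuousOn_const.mul (Real.continuousOn_log.mono (fun x hx => by
          simp; linarith [hx.1]))
      · exact (continuousOn_id.pow 2)
      · intro x hx; have : (1:ℝ) ≤ x := hx.1; positivity
  have e4 : ∫ t in Ioi (4:ℝ), hallPdf t = -1 - hallH 4 := by
    apply integral_Ioi_of_hasDerivAt_of_tendsto continuousAt_hallH.continuousWithinAt ?_ i4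
      tendsto_hallH
    intro x hx
    rw [hallPdf_eq_top (le_of_lt hx)]
    exact hasDerivAt_hallH hx
  have hG1 : hallG 1 = -2 := by unfold hallG; simp
  have hH4 : hallH 4 = hallG 4 := by
    unfold hallH hallG
    norm_num [artanh_zero_s7]
  rw [← hsplit1, setIntegral_union (Ioc_disjoint_Ioi le_rfl) measurableSet_Ioi i01 i1,
    ← hsplit2, setIntegral_union (Ioc_disjoint_Ioi le_rfl) measurableSet_Ioi i14 i4,
    e01, e14, e4, hG1, hH4]
  ring
end

section
/- For every t > 0, the two-dimensional Lebesgue measure of the set A(t) := {(a,b) ∈ ℝ² : 0 < a ≤ 1, 1 − 2a ≤ b ≤ 1 − a, and b ≥ 1/(a t) − a} equals: 0 if 0 < t < 1; 1 − (1 + log t)/t if 1 ≤ t < 4; and 1 − (1 + log t)/t − (1/2)·√(1 − 4/t) + (2/t)·artanh(√(1 − 4/t)) if t ≥ 4. Moreover this measure tends to 1/2 as t → ∞. -/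
/-- The part of the triangle `{0 < a ≤ 1, 1 - 2a ≤ b ≤ 1 - a}` lying on or above the
hyperbola `b = 1/(a t) - a`. -/
def sweptRegion (t : ℝ) : Set (ℝ × ℝ) :=
  {p : ℝ × ℝ | 0 < p.1 ∧ p.1 ≤ 1 ∧ 1 - 2 * p.1 ≤ p.2 ∧ p.2 ≤ 1 - p.1 ∧
    1 / (p.1 * t) - p.1 ≤ p.2}


section SweptAux
open MeasureTheory Filter Set

/-- section length function -/
noncomputable def gfun (t a : ℝ) : ℝ := max (min a (1 - 1 / (a * t))) 0

lemma gfun_meas (t : ℝ) : Measurable (gfun t) := by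
  unfold gfun
  exact (measurable_id.min (measurable_const.sub
    (measurable_const.div (measurable_id.mul_const t)))).max measurable_const

lemma sweptRegion_meas (t : ℝ) : MeasurableSet (sweptRegion t) := by
  unfold sweptRegion
  have h1 : Measurable fun p : ℝ × ℝ => p.1 := measurable_fst
  have h2 : Measurable fun p : ℝ × ℝ => p.2 := measurable_snd
  have h3 : Measurable fun p : ℝ × ℝ => 1 / (p.1 * t) - p.1 :=
    (measurable_const.div (h1.mul_const t)).sub h1
  exact (measurableSet_lt measurable_const h1).inter <| (measurableSet_le h1 measurable_const).inter
    <| (measurableSet_le (measurable_const.sub (h1.const_mul 2)) h2).inter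
    <| (measurableSet_le h2 (measurable_const.sub h1)).inter (measurableSet_le h3 h2)

lemma slice_eq (t a : ℝ) : (Prod.mk a ⁻¹' sweptRegion t) =
    if 0 < a ∧ a ≤ 1 then Icc (max (1 - 2 * a) (1 / (a * t) - a)) (1 - a) else ∅ := by
  ext b
  simp only [sweptRegion, Set.mem_preimage, Set.mem_setOf_eq, Set.mem_Icc]
  split_ifs with h
  · simp only [Set.mem_Icc, max_le_iff]
    tauto
  · simp only [Set.mem_empty_iff_false, iff_false]
    tauto

lemma volume_eq (t : ℝ) : volume (sweptRegion t)
    = ∫⁻ a in Ioc (0:ℝ) 1, ENNReal.ofReal (gfun t a) := by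
  rw [show (volume : Measure (ℝ × ℝ)) = (volume : Measure ℝ).prod volume from
    (MeasureTheory.Measure.volume_eq_prod ℝ ℝ).symm, Measure.prod_apply (sweptRegion_meas t)]
  rw [← lintegral_indicator measurableSet_Ioc _]
  congr 1
  ext a
  rw [slice_eq]
  rw [Set.indicator_apply]
  by_cases h : a ∈ Ioc (0:ℝ) 1
  · have h' : 0 < a ∧ a ≤ 1 := h
    rw [if_pos h', if_pos h, Real.volume_Icc]
    have ha : 0 < a := h'.1
    have key : (1 - a) - max (1 - 2 * a) (1 / (a * t) - a) = min a (1 - 1 / (a * t)) := by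
      rcases le_total (1 - 2 * a) (1 / (a * t) - a) with hc | hc
      · rw [max_eq_right hc, min_eq_right (by linarith)]; ring
      · rw [max_eq_left hc, min_eq_left (by linarith)]; ring
    rw [key]
    show _ = ENNReal.ofReal (max (min a (1 - 1 / (a * t))) 0)
    rcases le_total (min a (1 - 1 / (a * t))) 0 with hm | hm
    · rw [max_eq_right hm, ENNReal.ofReal_eq_zero.mpr hm, ENNReal.ofReal_zero]
    · rw [max_eq_left hm]
  · have h' : ¬ (0 < a ∧ a ≤ 1) := fun hh => h ⟨hh.1, hh.2⟩
    rw [if_neg h', if_neg h]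
    simp

lemma gfun_integrableOn (t : ℝ) : IntegrableOn (gfun t) (Ioc (0:ℝ) 1) := by
  apply Measure.integrableOn_of_bounded (M := 1)
  · simp [Real.volume_Ioc]
  · exact (gfun_meas t).aestronglyMeasurable
  · filter_upwards [ae_restrict_mem measurableSet_Ioc] with a ha
    rw [Real.norm_eq_abs, abs_of_nonneg (le_max_right _ _)]
    exact max_le (le_trans (min_le_left _ _) ha.2) one_pos.le

lemma toReal_eq (t : ℝ) : (volume (sweptRegion t)).toReal = ∫ a in Ioc (0:ℝ) 1, gfun t a := by
  rw [volume_eq,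
    ← MeasureTheory.ofReal_integral_eq_lintegral_ofReal (gfun_integrableOn t)
      (Eventually.of_forall fun a => le_max_right _ _),
    ENNReal.toReal_ofReal]
  exact integral_nonneg fun a => le_max_right _ _

lemma integral_piece {t x y : ℝ} (hx : 0 < x) (hxy : x ≤ y) :
    ∫ a in x..y, (1 - 1/(a*t)) = (y - x) - (Real.log y - Real.log x)/t := by
  have h0 : (0:ℝ) ∉ Set.uIcc x y := by
    rw [Set.uIcc_of_le hxy]; intro h; exact hx.not_ge h.1
  have hI : IntervalIntegrable (fun a : ℝ => 1/a) volume x y :=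
    intervalIntegral.intervalIntegrable_one_div (fun z hz h => h0 (h ▸ hz)) continuousOn_id
  have heq : ∀ a : ℝ, 1 - 1/(a*t) = 1 - (1/t) * (1/a) := by
    intro a; rw [mul_comm a t, one_div (t*a), mul_inv]; ring
  simp_rw [heq]
  rw [intervalIntegral.integral_sub intervalIntegrable_const (hI.const_mul (1/t)),
    intervalIntegral.integral_const_mul, integral_one_div h0,
    intervalIntegral.integral_const, Real.log_div (by linarith) (by linarith), smul_eq_mul]
  ring

lemma gfun_eq_zero {t a : ℝ} (ht : 0 < t) (ha : 0 ≤ a) (h : a * t ≤ 1) : gfun t a = 0 := by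
  rcases eq_or_lt_of_le ha with rfl | ha'
  · simp [gfun]
  · have hpos : 0 < a * t := mul_pos ha' ht
    have h1 : 1 ≤ 1 / (a * t) := one_le_one_div hpos h
    exact max_eq_right (le_trans (min_le_right _ _) (by linarith))

lemma gfun_eq_lin {t a : ℝ} (ht : 0 < t) (ha : 0 < a) (h1 : 1 ≤ a * t)
    (h2 : 0 ≤ t * a ^ 2 - t * a + 1) : gfun t a = 1 - 1 / (a * t) := by
  have hpos : 0 < a * t := mul_pos ha ht
  have hd : 1 / (a * t) ≤ 1 := (div_le_one hpos).mpr h1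
  have hle : 1 - 1 / (a * t) ≤ a := by
    rcases le_or_gt (1 - a) 0 with hc | hc
    · have : 0 < 1 / (a * t) := by positivity
      linarith
    · have h3 : (1 - a) * (a * t) ≤ 1 := by nlinarith
      have : 1 - a ≤ 1 / (a * t) := (le_div_iff₀ hpos).mpr h3
      linarith
  rw [gfun, min_eq_right hle, max_eq_left (by linarith)]

lemma gfun_eq_id {t a : ℝ} (ht : 0 < t) (ha : 0 ≤ a)
    (h2 : t * a ^ 2 - t * a + 1 ≤ 0) : gfun t a = a := by
  have ha' : 0 < a := by
    rcases eq_or_lt_of_le ha with rfl | h; · nlinarith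
    · exact h
  have hpos : 0 < a * t := mul_pos ha' ht
  have h3 : 1 ≤ (1 - a) * (a * t) := by nlinarith
  have hle : a ≤ 1 - 1 / (a * t) := by
    have : 1 / (a * t) ≤ 1 - a := (div_le_iff₀ hpos).mpr h3
    linarith
  rw [gfun, min_eq_left hle, max_eq_left ha]

lemma hIg (t : ℝ) {x y : ℝ} (hx : 0 ≤ x) (hx1 : x ≤ 1) (hy : 0 ≤ y) (hy1 : y ≤ 1) :
    IntervalIntegrable (gfun t) volume x y := by
  rw [intervalIntegrable_iff]
  exact (gfun_integrableOn t).mono_set (fun z hz => by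
    rcases hz with ⟨h1, h2⟩
    constructor
    · exact lt_of_le_of_lt (le_min hx hy) h1
    · exact le_trans h2 (max_le hx1 hy1))

lemma main_lt_one {t : ℝ} (ht : 0 < t) (ht1 : t < 1) :
    ∫ a in Ioc (0:ℝ) 1, gfun t a = 0 := by
  rw [MeasureTheory.setIntegral_congr_fun measurableSet_Ioc
    (g := fun _ => (0:ℝ)) (fun a ha => gfun_eq_zero ht ha.1.le (by nlinarith [ha.1, ha.2]))]
  simp

lemma main_mid {t : ℝ} (ht : 1 ≤ t) (ht4 : t < 4) :
    ∫ a in Ioc (0:ℝ) 1, gfun t a = 1 - (1 + Real.log t) / t := by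
  have ht0 : 0 < t := by linarith
  have hinv : 0 < 1/t := by positivity
  have hinv1 : 1/t ≤ 1 := by rw [div_le_one ht0]; linarith
  rw [← intervalIntegral.integral_of_le (by norm_num : (0:ℝ) ≤ 1),
    ← intervalIntegral.integral_add_adjacent_intervals
      (hIg t le_rfl zero_le_one hinv.le hinv1) (hIg t hinv.le hinv1 zero_le_one le_rfl)]
  have e1 : ∫ a in (0:ℝ)..(1/t), gfun t a = 0 := by
    rw [intervalIntegral.integral_congr (g := fun _ => (0:ℝ))]
    · simp
    · intro a ha
      rw [Set.uIcc_of_le hinv.le] at ha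
      exact gfun_eq_zero ht0 ha.1 (by rw [← div_mul_cancel₀ (1:ℝ) ht0.ne']; nlinarith [ha.2])
  have e2 : ∫ a in (1/t)..(1:ℝ), gfun t a = (1 - 1/t) - (Real.log 1 - Real.log (1/t))/t := by
    rw [intervalIntegral.integral_congr (g := fun a => 1 - 1/(a*t))]
    · exact integral_piece hinv hinv1
    · intro a ha
      rw [Set.uIcc_of_le hinv1] at ha
      have ha0 : 0 < a := lt_of_lt_of_le hinv ha.1
      have h1 : 1 ≤ a * t := by
        rw [← div_mul_cancel₀ (1:ℝ) ht0.ne']; nlinarith [ha.1]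
      exact gfun_eq_lin ht0 ha0 h1 (by nlinarith [sq_nonneg (2*a - 1)])
  rw [e1, e2, Real.log_one, one_div t, Real.log_inv]
  field_simp
  ring

set_option maxHeartbeats 1000000 in
lemma main_ge {t : ℝ} (ht : 4 ≤ t) :
    ∫ a in Ioc (0:ℝ) 1, gfun t a = 1 - (1 + Real.log t) / t
      - (1 / 2) * Real.sqrt (1 - 4 / t) + (2 / t) * artanh (Real.sqrt (1 - 4 / t)) := by
  have ht0 : 0 < t := by linarith
  set s := Real.sqrt (1 - 4 / t) with hs_def
  have hs0 : 0 ≤ s := Real.sqrt_nonneg _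
  have harg : 0 ≤ 1 - 4 / t := by
    rw [sub_nonneg, div_le_one ht0]; exact ht
  have hs2 : s ^ 2 = 1 - 4 / t := Real.sq_sqrt harg
  have hts : t * s ^ 2 = t - 4 := by rw [hs2]; field_simp
  have hslt : s < 1 := by
    have h40 : 0 < 4 / t := by positivity
    nlinarith [hs2]
  have hs1 : s ≤ 1 := hslt.le
  have h4 : t * (1 - s) * (1 + s) = 4 := by nlinarith
  have hinv : 0 < 1 / t := by positivity
  have ham0 : 0 < (1 - s) / 2 := by linarith
  have hinvam : 1 / t ≤ (1 - s) / 2 := by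
    rw [div_le_div_iff₀ ht0 two_pos]; nlinarith
  have hamap : (1 - s) / 2 ≤ (1 + s) / 2 := by linarith
  have hap1 : (1 + s) / 2 ≤ 1 := by linarith
  have ham1 : (1 - s) / 2 ≤ 1 := by linarith
  have hinv1 : 1 / t ≤ 1 := le_trans hinvam ham1
  have hap0 : 0 < (1 + s) / 2 := by linarith
  -- split integral
  rw [← intervalIntegral.integral_of_le (by norm_num : (0:ℝ) ≤ 1),
    ← intervalIntegral.integral_add_adjacent_intervals
      (hIg t le_rfl zero_le_one (le_trans hinv.le (le_trans hinvam hamap)) hap1)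
      (hIg t (le_trans hinv.le (le_trans hinvam hamap)) hap1 zero_le_one le_rfl),
    ← intervalIntegral.integral_add_adjacent_intervals
      (hIg t le_rfl zero_le_one hinv.le hinv1) (hIg t hinv.le hinv1 (by linarith) hap1),
    ← intervalIntegral.integral_add_adjacent_intervals
      (hIg t hinv.le hinv1 (by linarith) ham1) (hIg t (by linarith) ham1 (by linarith) hap1)]
  have e1 : ∫ a in (0:ℝ)..(1/t), gfun t a = 0 := by
    rw [intervalIntegral.integral_congr (g := fun _ => (0:ℝ))]
    · simp
    · intro a ha
      rw [Set.uIcc_of_le hinv.le] at ha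
      exact gfun_eq_zero ht0 ha.1 (by rw [← div_mul_cancel₀ (1:ℝ) ht0.ne']; nlinarith [ha.2])
  have e2 : ∫ a in (1/t)..((1-s)/2), gfun t a
      = ((1-s)/2 - 1/t) - (Real.log ((1-s)/2) - Real.log (1/t)) / t := by
    rw [intervalIntegral.integral_congr (g := fun a => 1 - 1/(a*t))]
    · exact integral_piece hinv hinvam
    · intro a ha
      rw [Set.uIcc_of_le hinvam] at ha
      have ha0 : 0 < a := lt_of_lt_of_le hinv ha.1
      have h1 : 1 ≤ a * t := by
        rw [← div_mul_cancel₀ (1:ℝ) ht0.ne']; nlinarith [ha.1]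
      refine gfun_eq_lin ht0 ha0 h1 ?_
      have hq : t * a ^ 2 - t * a + 1 = t * ((1-s)/2 - a) * ((1+s)/2 - a) := by
        have : t * ((1-s)/2 - a) * ((1+s)/2 - a)
            = t * a ^ 2 - t * a + (t - t * s ^ 2) / 4 := by ring
        rw [this, hts]; ring
      rw [hq]
      have := ha.2
      nlinarith [mul_nonneg (sub_nonneg.mpr ha.2) (by linarith : (0:ℝ) ≤ (1+s)/2 - a)]
  have e3 : ∫ a in ((1-s)/2)..((1+s)/2), gfun t a
      = (((1+s)/2) ^ 2 - ((1-s)/2) ^ 2) / 2 := by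
    rw [intervalIntegral.integral_congr (g := fun a => a)]
    · rw [integral_id]
    · intro a ha
      rw [Set.uIcc_of_le hamap] at ha
      refine gfun_eq_id ht0 (by linarith [ha.1]) ?_
      have hq : t * a ^ 2 - t * a + 1 = t * (a - (1-s)/2) * (a - (1+s)/2) := by
        have : t * (a - (1-s)/2) * (a - (1+s)/2)
            = t * a ^ 2 - t * a + (t - t * s ^ 2) / 4 := by ring
        rw [this, hts]; ring
      rw [hq]
      nlinarith [mul_nonneg (sub_nonneg.mpr ha.1) (sub_nonneg.mpr ha.2)]
  have e4 : ∫ a in ((1+s)/2)..(1:ℝ), gfun t a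
      = (1 - (1+s)/2) - (Real.log 1 - Real.log ((1+s)/2)) / t := by
    rw [intervalIntegral.integral_congr (g := fun a => 1 - 1/(a*t))]
    · exact integral_piece hap0 hap1
    · intro a ha
      rw [Set.uIcc_of_le hap1] at ha
      have ha0 : 0 < a := lt_of_lt_of_le hap0 ha.1
      have h1 : 1 ≤ a * t := by
        rw [← div_mul_cancel₀ (1:ℝ) ht0.ne']
        have : 1 / t ≤ a := le_trans hinvam (le_trans hamap ha.1)
        nlinarith
      refine gfun_eq_lin ht0 ha0 h1 ?_
      have hq : t * a ^ 2 - t * a + 1 = t * (a - (1-s)/2) * (a - (1+s)/2) := by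
        have : t * (a - (1-s)/2) * (a - (1+s)/2)
            = t * a ^ 2 - t * a + (t - t * s ^ 2) / 4 := by ring
        rw [this, hts]; ring
      rw [hq]
      nlinarith [mul_nonneg (by linarith [ha.1] : (0:ℝ) ≤ a - (1-s)/2) (sub_nonneg.mpr ha.1)]
  rw [e1, e2, e3, e4, Real.log_one, one_div t, Real.log_inv,
    Real.log_div (by linarith : (1-s) ≠ 0) (two_ne_zero),
    Real.log_div (by linarith : (1+s) ≠ 0) (two_ne_zero), artanh,
    Real.log_div (by linarith : (1+s) ≠ 0) (by linarith : (1-s) ≠ 0)]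
  field_simp
  ring

lemma part1 (t : ℝ) (ht : 0 < t) : (volume (sweptRegion t)).toReal =
    if t < 1 then 0
    else if t < 4 then 1 - (1 + Real.log t) / t
    else 1 - (1 + Real.log t) / t - (1 / 2) * Real.sqrt (1 - 4 / t)
      + (2 / t) * artanh (Real.sqrt (1 - 4 / t)) := by
  rw [toReal_eq]
  split_ifs with h1 h2
  · exact main_lt_one ht h1
  · exact main_mid (not_lt.mp h1) h2
  · exact main_ge (not_lt.mp h2)

lemma artanh_key {t : ℝ} (ht : 4 ≤ t) :
    (2 / t) * artanh (Real.sqrt (1 - 4 / t))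
      = (1 / t) * (2 * Real.log (1 + Real.sqrt (1 - 4 / t)) - Real.log 4)
        + Real.log t / t := by
  have ht0 : 0 < t := by linarith
  set s := Real.sqrt (1 - 4 / t) with hs_def
  have hs0 : 0 ≤ s := Real.sqrt_nonneg _
  have harg : 0 ≤ 1 - 4 / t := by rw [sub_nonneg, div_le_one ht0]; exact ht
  have hs2 : s ^ 2 = 1 - 4 / t := Real.sq_sqrt harg
  have hts : t * s ^ 2 = t - 4 := by rw [hs2]; field_simp
  have hslt : s < 1 := by
    have h40 : 0 < 4 / t := by positivity
    nlinarith [hs2]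
  have h4 : t * (1 - s) * (1 + s) = 4 := by nlinarith
  have h1m : (0:ℝ) < 1 - s := by linarith
  have h1p : (0:ℝ) < 1 + s := by linarith
  have heq : 1 - s = 4 / (t * (1 + s)) := by
    rw [eq_div_iff (by positivity)]; nlinarith
  have hlog : Real.log (1 - s) = Real.log 4 - Real.log t - Real.log (1 + s) := by
    rw [heq, Real.log_div (by norm_num) (by positivity),
      Real.log_mul ht0.ne' h1p.ne']; ring
  rw [artanh, Real.log_div h1p.ne' h1m.ne', hlog]
  field_simp
  ring

open Real in
lemma part2 : Tendsto (fun t : ℝ => (volume (sweptRegion t)).toReal) atTop (nhds (1 / 2)) := by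
  have A : Tendsto (fun t : ℝ => 1 / t) atTop (nhds 0) := by
    simpa [one_div] using (tendsto_inv_atTop_zero : Tendsto (fun t : ℝ => t⁻¹) atTop (nhds 0))
  have B : Tendsto (fun t : ℝ => Real.log t / t) atTop (nhds 0) := by
    have := Real.tendsto_pow_log_div_mul_add_atTop 1 0 1 one_ne_zero
    simpa using this
  have Carg : Tendsto (fun t : ℝ => 1 - 4 / t) atTop (nhds 1) := by
    have : Tendsto (fun t : ℝ => 4 / t) atTop (nhds 0) := by
      have := A.const_mul 4
      simpa [div_eq_mul_inv, one_div, mul_comm] using this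
    simpa using tendsto_const_nhds.sub this
  have C : Tendsto (fun t : ℝ => Real.sqrt (1 - 4 / t)) atTop (nhds 1) := by
    have := (Real.continuous_sqrt.tendsto 1).comp Carg
    simpa [Function.comp_def] using this
  have D : Tendsto (fun t : ℝ => 2 * Real.log (1 + Real.sqrt (1 - 4 / t)) - Real.log 4)
      atTop (nhds (2 * Real.log 2 - Real.log 4)) := by
    have h2 : Tendsto (fun t : ℝ => 1 + Real.sqrt (1 - 4 / t)) atTop (nhds 2) := by
      have h := (tendsto_const_nhds (x := (1:ℝ))).add C
      norm_num at h
      exact h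
    have hlog2 : Tendsto (fun t : ℝ => Real.log (1 + Real.sqrt (1 - 4 / t)))
        atTop (nhds (Real.log 2)) :=
      ((Real.continuousAt_log (by norm_num)).tendsto).comp h2
    exact (hlog2.const_mul 2).sub tendsto_const_nhds
  have hG : Tendsto (fun t : ℝ => 1 - 1 / t - Real.log t / t
        - (1 / 2) * Real.sqrt (1 - 4 / t)
        + ((1 / t) * (2 * Real.log (1 + Real.sqrt (1 - 4 / t)) - Real.log 4)
          + Real.log t / t)) atTop
      (nhds (1 - 0 - 0 - (1 / 2) * 1 + (0 * (2 * Real.log 2 - Real.log 4) + 0))) :=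
    (((tendsto_const_nhds.sub A).sub B).sub (C.const_mul (1 / 2))).add ((A.mul D).add B)
  have hval : (1:ℝ) - 0 - 0 - (1 / 2) * 1 + (0 * (2 * Real.log 2 - Real.log 4) + 0)
      = 1 / 2 := by norm_num
  rw [hval] at hG
  refine hG.congr' ?_
  filter_upwards [eventually_ge_atTop (4:ℝ)] with t ht
  have ht0 : 0 < t := by linarith
  rw [part1 t ht0, if_neg (by linarith), if_neg (by linarith), artanh_key ht,
    add_div 1 (Real.log t) t]
  ring

end SweptAux

open MeasureTheory Filter in
/-- The area swept out by return-time level sets on the square-torus Poincaré section: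
its value for each `t > 0`, and its limit `1/2` as `t → ∞`. -/
theorem swept_area_formula :
    (∀ t : ℝ, 0 < t → (volume (sweptRegion t)).toReal =
      if t < 1 then 0
      else if t < 4 then 1 - (1 + Real.log t) / t
      else 1 - (1 + Real.log t) / t - (1 / 2) * Real.sqrt (1 - 4 / t)
        + (2 / t) * artanh (Real.sqrt (1 - 4 / t))) ∧
    Tendsto (fun t : ℝ => (volume (sweptRegion t)).toReal) atTop (nhds (1 / 2)) := by
  exact ⟨part1, part2⟩
end

section
/- Let Λ ⊆ ℝ² be locally finite (every bounded subset of ℝ² contains only finitely many points of Λ), with every (x,y) ∈ Λ satisfying x > 0 and y ≥ 0. Suppose Λ contains a point with positive second coordinate, let y₀ := min{y : (x,y) ∈ Λ, y > 0} (assumed attained), let x₀ := min{x : (x, y₀) ∈ Λ} (assumed attained), and let α > 0. Define Ω := {(a,b) ∈ ℝ² : 0 < b ≤ 1, (x₀ b − 1)/y₀ ≤ a < (x₀ b − 1)/y₀ + α b}, for y > 0 define the strip S(x,y) := {(a,b) ∈ ℝ² : 0 < b x − a y ≤ 1}, and say that (x,y) ∈ Λ with y > 0 wins at a point q ∈ Ω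 if q ∈ S(x,y) and y/x < y'/x' for every (x',y') ∈ Λ with y' > 0, (x',y') ≠ (x,y), and q ∈ S(x',y'). Then: if (x,y) ∈ Λ wins at some point of Ω, the point p := ((x−1)/y, 1) satisfies (x₀−1)/y₀ ≤ (x−1)/y ≤ (x₀−1)/y₀ + α, the vector (x,y) wins at p, and the set {a ∈ ℝ : (x,y) wins at (a,1)} is an interval with nonempty interior whose left endpoint is (x−1)/y. -/
/-- The candidacy strip of a vector `(x, y)` in the rotated parametrization:
`{(a,b) : 0 < bx - ay ≤ 1}`. -/
def candidacyStrip (x y : ℝ) : Set (ℝ × ℝ) :=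
  {p : ℝ × ℝ | 0 < p.2 * x - p.1 * y ∧ p.2 * x - p.1 * y ≤ 1}

/-- The vector `v` wins at the point `q` (relative to the set `Λ` of holonomy vectors):
`q` lies in the candidacy strip of `v`, and `v` has strictly smaller slope than every other
candidate vector of `Λ` whose strip contains `q`. -/
def Wins (Λ : Set (ℝ × ℝ)) (v q : ℝ × ℝ) : Prop :=
  q ∈ candidacyStrip v.1 v.2 ∧
    ∀ w ∈ Λ, 0 < w.2 → w ≠ v → q ∈ candidacyStrip w.1 w.2 → v.2 / v.1 < w.2 / w.1

lemma memStripTop {x y a : ℝ} :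
    ((a, (1:ℝ)) : ℝ × ℝ) ∈ candidacyStrip x y ↔ 0 < x - a * y ∧ x - a * y ≤ 1 := by
  simp [candidacyStrip]

/-- Every vector that wins somewhere on a Poincaré section component wins on an interval of
the top edge whose left endpoint is `((x-1)/y, 1)`. -/
theorem winner_wins_on_top_edge (Λ : Set (ℝ × ℝ))
    (hloc : ∀ B : Set (ℝ × ℝ), Bornology.IsBounded B → (Λ ∩ B).Finite)
    (hpos : ∀ p ∈ Λ, 0 < p.1 ∧ 0 ≤ p.2)
    (y₀ x₀ α : ℝ) (hα : 0 < α)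
    (hy₀pos : 0 < y₀)
    (hx₀mem : (x₀, y₀) ∈ Λ)
    (hy₀min : ∀ p ∈ Λ, 0 < p.2 → y₀ ≤ p.2)
    (hx₀min : ∀ x : ℝ, (x, y₀) ∈ Λ → x₀ ≤ x)
    (Ω : Set (ℝ × ℝ))
    (hΩ : Ω = {p : ℝ × ℝ | 0 < p.2 ∧ p.2 ≤ 1 ∧
        (x₀ * p.2 - 1) / y₀ ≤ p.1 ∧ p.1 < (x₀ * p.2 - 1) / y₀ + α * p.2})
    (v : ℝ × ℝ) (hv : v ∈ Λ) (hvy : 0 < v.2)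
    (q : ℝ × ℝ) (hq : q ∈ Ω) (hwin : Wins Λ v q) :
    ((x₀ - 1) / y₀ ≤ (v.1 - 1) / v.2 ∧ (v.1 - 1) / v.2 ≤ (x₀ - 1) / y₀ + α) ∧
    Wins Λ v ((v.1 - 1) / v.2, 1) ∧
    ({a : ℝ | Wins Λ v (a, 1)}.OrdConnected ∧
      (interior {a : ℝ | Wins Λ v (a, 1)}).Nonempty ∧
      IsLeast {a : ℝ | Wins Λ v (a, 1)} ((v.1 - 1) / v.2)) := by
  classical
  rw [hΩ] at hq
  obtain ⟨hb0, hb1, hqa1, hqa2⟩ := hq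
  have hv1 : 0 < v.1 := (hpos v hv).1
  obtain ⟨⟨hc1, hc2⟩, hmin⟩ := hwin
  have hx₀pos : 0 < x₀ := (hpos _ hx₀mem).1
  have hy₀v : y₀ ≤ v.2 := hy₀min v hv hvy
  set A : ℝ := (v.1 - 1) / v.2 with hAdef
  clear_value A
  have hAv2 : A * v.2 = v.1 - 1 := by rw [hAdef]; exact div_mul_cancel₀ _ (ne_of_gt hvy)
  have hAmul : ∀ t : ℝ, A * t * v.2 = (v.1 - 1) * t := by
    intro t
    calc A * t * v.2 = A * v.2 * t := by ring
      _ = (v.1 - 1) * t := by rw [hAv2]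
  -- Step 1: slope of v is at most the slope of (x₀, y₀).
  have key1 : x₀ * v.2 ≤ v.1 * y₀ := by
    by_cases hveq : v = (x₀, y₀)
    · rw [hveq]
    · by_cases hu : 0 < q.2 * x₀ - q.1 * y₀
      · have hu2 : q.2 * x₀ - q.1 * y₀ ≤ 1 := by
          have h := (div_le_iff₀ hy₀pos).1 hqa1
          linarith
        have hs := hmin (x₀, y₀) hx₀mem hy₀pos (fun h => hveq h.symm) ⟨hu, hu2⟩
        have h2 := (div_lt_div_iff₀ hv1 hx₀pos).1 hs
        linarith
      · push_neg at hu
        have e1 : (q.2 * x₀) * v.2 ≤ (q.1 * y₀) * v.2 :=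
          mul_le_mul_of_nonneg_right (by linarith) hvy.le
        have e2 : (q.1 * v.2) * y₀ < (q.2 * v.1) * y₀ :=
          mul_lt_mul_of_pos_right (by linarith) hy₀pos
        have e3 : q.2 * (x₀ * v.2) ≤ q.2 * (v.1 * y₀) := by linarith
        exact le_of_mul_le_mul_left e3 hb0
  -- lower bound
  have lower : (x₀ - 1) / y₀ ≤ A := by
    rw [hAdef, div_le_div_iff₀ hy₀pos hvy]
    linarith
  -- upper bound
  have h1q : (q.1 - α * q.2) * y₀ < x₀ * q.2 - 1 := by
    rw [← lt_div_iff₀ hy₀pos]; linarith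
  have h2q : q.2 * v.1 - 1 ≤ q.1 * v.2 := by linarith
  have hT : q.2 * (v.1 * y₀ - x₀ * v.2 - α * y₀ * v.2) < y₀ - v.2 := by
    have e1 := mul_le_mul_of_nonneg_right h2q hy₀pos.le
    have e2 := mul_lt_mul_of_pos_right h1q hvy
    nlinarith [e1, e2]
  have hTneg : v.1 * y₀ - x₀ * v.2 - α * y₀ * v.2 < 0 := by
    by_contra hcon
    push_neg at hcon
    have := mul_nonneg hb0.le hcon
    linarith
  have key2 : (v.1 - 1) * y₀ ≤ (x₀ - 1 + α * y₀) * v.2 := by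
    have e3 : 0 ≤ (1 - q.2) * (-(v.1 * y₀ - x₀ * v.2 - α * y₀ * v.2)) :=
      mul_nonneg (by linarith) (by linarith)
    linarith
  have upper : A ≤ (x₀ - 1) / y₀ + α := by
    have h := (div_le_div_iff₀ hvy hy₀pos).2 key2
    have heq : (x₀ - 1 + α * y₀) / y₀ = (x₀ - 1) / y₀ + α := by
      rw [add_div, mul_div_assoc, div_self hy₀pos.ne', mul_one]
    rw [hAdef]; linarith [h, heq.le]
  -- Step 2: v wins at the left endpoint (A, 1).
  have winp : Wins Λ v ((A, 1) : ℝ × ℝ) := by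
    constructor
    · exact memStripTop.2 ⟨by linarith, by linarith⟩
    · intro w hwΛ hw2 hwne hwc
      have hw1 : 0 < w.1 := (hpos w hwΛ).1
      obtain ⟨hwc1, hwc2⟩ := memStripTop.1 hwc
      rw [div_lt_div_iff₀ hv1 hw1]
      by_contra hle
      push_neg at hle
      -- hle : w.2 * v.1 ≤ v.2 * w.1
      have hAw : (w.1 - 1) * v.2 ≤ (v.1 - 1) * w.2 := by
        have e := mul_le_mul_of_nonneg_right hwc2 hvy.le
        have hb := hAmul w.2
        linarith
      -- w's strip value at q is positive
      have hq0 : 0 < q.2 * w.1 - q.1 * w.2 := by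
        have e1 : (q.1 * v.2) * w.2 < (q.2 * v.1) * w.2 :=
          mul_lt_mul_of_pos_right (by linarith) hw2
        have e2 : q.2 * (w.2 * v.1) ≤ q.2 * (v.2 * w.1) :=
          mul_le_mul_of_nonneg_left hle hb0.le
        have e3 : (q.1 * w.2) * v.2 < (q.2 * w.1) * v.2 := by linarith
        have := lt_of_mul_lt_mul_right e3 hvy.le
        linarith
      by_cases hq1 : q.2 * w.1 - q.1 * w.2 ≤ 1
      · have h := hmin w hwΛ hw2 hwne ⟨hq0, hq1⟩
        rw [div_lt_div_iff₀ hv1 hw1] at h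
        linarith
      · push_neg at hq1
        have e4 : (1 - q.2) * (w.2 * v.1) ≤ (1 - q.2) * (v.2 * w.1) :=
          mul_le_mul_of_nonneg_left hle (by linarith)
        have e5 : (1 : ℝ) * v.2 < (q.2 * w.1 - q.1 * w.2) * v.2 :=
          mul_lt_mul_of_pos_right hq1 hvy
        have e6 : (q.2 * v.1 - q.1 * v.2) * w.2 ≤ 1 * w.2 :=
          mul_le_mul_of_nonneg_right hc2 hw2.le
        linarith
  -- Step 3a: the winning set on the top edge is order-connected.
  have hOC : ({a : ℝ | Wins Λ v (a, 1)}).OrdConnected := by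
    constructor
    intro x hx y hy z hz
    have hx' : Wins Λ v ((x, 1) : ℝ × ℝ) := hx
    have hy' : Wins Λ v ((y, 1) : ℝ × ℝ) := hy
    obtain ⟨hxs1, hxs2⟩ := memStripTop.1 hx'.1
    obtain ⟨hys1, hys2⟩ := memStripTop.1 hy'.1
    obtain ⟨hz1, hz2⟩ := hz
    show Wins Λ v ((z, 1) : ℝ × ℝ)
    constructor
    · refine memStripTop.2 ⟨?_, ?_⟩
      · have := mul_le_mul_of_nonneg_right hz2 hvy.le
        linarith
      · have := mul_le_mul_of_nonneg_right hz1 hvy.le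
        linarith
    · intro w hwΛ hw2 hwne hwc
      have hw1 : 0 < w.1 := (hpos w hwΛ).1
      obtain ⟨hwc1, hwc2⟩ := memStripTop.1 hwc
      rw [div_lt_div_iff₀ hv1 hw1]
      by_contra hle
      push_neg at hle
      have c1 : 0 < w.1 - y * w.2 := by
        have e1 : (y * v.2) * w.2 < v.1 * w.2 :=
          mul_lt_mul_of_pos_right (by linarith) hw2
        have e3 : (y * w.2) * v.2 < w.1 * v.2 := by linarith
        have := lt_of_mul_lt_mul_right e3 hvy.le
        linarith
      have c2 : w.1 - y * w.2 ≤ 1 := by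
        have := mul_le_mul_of_nonneg_right hz2 hw2.le
        linarith
      have h := hy'.2 w hwΛ hw2 hwne (memStripTop.2 ⟨c1, c2⟩)
      rw [div_lt_div_iff₀ hv1 hw1] at h
      linarith
  -- Step 3b: least element.
  have hleast : IsLeast {a : ℝ | Wins Λ v (a, 1)} A := by
    constructor
    · exact winp
    · intro a ha
      have ha' : Wins Λ v ((a, 1) : ℝ × ℝ) := ha
      obtain ⟨_, has2⟩ := memStripTop.1 ha'.1
      rw [hAdef, div_le_iff₀ hvy]
      linarith
  -- Step 3c: nonempty interior via local finiteness.
  set M : ℝ := 2 * v.1 + 2 + (2 * v.1 + 2) * v.2 / v.1 with hM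
  clear_value M
  have hMaux : 0 ≤ (2 * v.1 + 2) * v.2 / v.1 := by positivity
  have hMpos : 0 < M := by rw [hM]; linarith
  obtain ⟨ε, hεpos, hεv2, hεbd⟩ :
      ∃ ε : ℝ, 0 < ε ∧ ε * v.2 ≤ 1 / 2 ∧
        ∀ w, w ∈ Λ → w ≠ v → 0 < w.2 → w.2 * v.1 ≤ v.2 * w.1 →
          dist w (0 : ℝ × ℝ) ≤ M → ε ≤ (w.1 - A * w.2 - 1) / w.2 := by
    have hBfin : (Λ ∩ Metric.closedBall (0 : ℝ × ℝ) M).Finite :=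
      hloc _ Metric.isBounded_closedBall
    set F : Finset (ℝ × ℝ) := hBfin.toFinset with hF
    set G : Finset ℝ :=
      (F.filter (fun w => w ≠ v ∧ 0 < w.2 ∧ w.2 * v.1 ≤ v.2 * w.1)).image
        (fun w => (w.1 - A * w.2 - 1) / w.2) with hG
    set T : Finset ℝ := insert (1 / (2 * v.2)) G with hTdef
    have hTne : T.Nonempty := Finset.insert_nonempty _ _
    refine ⟨T.min' hTne, ?_, ?_, ?_⟩
    · have hmem := T.min'_mem hTne
      rcases Finset.mem_insert.1 hmem with h | h
      · rw [h]; positivity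
      · obtain ⟨w, hwF, hwg⟩ := Finset.mem_image.1 h
        obtain ⟨hwF', hwne, hw2, hle⟩ := Finset.mem_filter.1 hwF
        have hwΛ : w ∈ Λ := ((hBfin.mem_toFinset).1 hwF').1
        have hw1 : 0 < w.1 := (hpos w hwΛ).1
        have hθ0 : 0 < w.1 - A * w.2 := by
          have e1 : A * w.2 * v.2 = (v.1 - 1) * w.2 := hAmul w.2
          have e2 : (v.1 - 1) * w.2 < w.1 * v.2 := by linarith
          have e3 : (A * w.2) * v.2 < w.1 * v.2 := by linarith
          have := lt_of_mul_lt_mul_right e3 hvy.le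
          linarith
        have hθ1 : 1 < w.1 - A * w.2 := by
          by_contra hcon
          push_neg at hcon
          have h := winp.2 w hwΛ hw2 hwne (memStripTop.2 ⟨hθ0, hcon⟩)
          rw [div_lt_div_iff₀ hv1 hw1] at h
          linarith
        rw [← hwg]
        exact div_pos (by linarith) hw2
    · have hεle : T.min' hTne ≤ 1 / (2 * v.2) :=
        Finset.min'_le _ _ (Finset.mem_insert_self _ _)
      have e1 := mul_le_mul_of_nonneg_right hεle hvy.le
      have e2 : 1 / (2 * v.2) * v.2 = 1 / 2 := by
        field_simp
      linarith
    · intro w hwΛ hwne hw2 hle hball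
      have hwF : w ∈ F := (hBfin.mem_toFinset).2 ⟨hwΛ, hball⟩
      have hwfil : w ∈ F.filter (fun w => w ≠ v ∧ 0 < w.2 ∧ w.2 * v.1 ≤ v.2 * w.1) :=
        Finset.mem_filter.2 ⟨hwF, hwne, hw2, hle⟩
      have hgG : (w.1 - A * w.2 - 1) / w.2 ∈ G := by
        rw [hG]; exact Finset.mem_image_of_mem _ hwfil
      exact Finset.min'_le _ _ (Finset.mem_insert_of_mem hgG)
  set a' : ℝ := A + ε / 2 with ha'
  clear_value a'
  have hwina' : Wins Λ v ((a', 1) : ℝ × ℝ) := by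
    have hεv2' : 0 < ε * v.2 := mul_pos hεpos hvy
    constructor
    · refine memStripTop.2 ⟨?_, ?_⟩
      · rw [ha']
        linarith [hAv2, hεv2, hεv2']
      · rw [ha']
        linarith [hAv2, hεv2, hεv2']
    · intro w hwΛ hw2 hwne hwc
      have hw1 : 0 < w.1 := (hpos w hwΛ).1
      obtain ⟨hwc1, hwc2⟩ := memStripTop.1 hwc
      rw [div_lt_div_iff₀ hv1 hw1]
      by_contra hle
      push_neg at hle
      -- bound w.1
      have ha'v2 : a' * v.2 ≤ v.1 - 3 / 4 := by
        rw [ha']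
        have : (A + ε / 2) * v.2 = A * v.2 + ε * v.2 / 2 := by ring
        rw [this, hAv2]
        linarith
      have wbound1 : w.1 ≤ 2 * v.1 + 2 := by
        rcases le_or_gt 0 a' with h | h
        · have e1 : a' * (w.2 * v.1) ≤ a' * (v.2 * w.1) :=
            mul_le_mul_of_nonneg_left hle h
          have e2 : (w.1 - a' * w.2) * v.1 ≤ 1 * v.1 :=
            mul_le_mul_of_nonneg_right hwc2 hv1.le
          have e3 : (a' * v.2) * w.1 ≤ (v.1 - 3 / 4) * w.1 :=
            mul_le_mul_of_nonneg_right ha'v2 hw1.le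
          linarith
        · have e1 : a' * w.2 < 0 := mul_neg_of_neg_of_pos h hw2
          linarith
      have wbound2 : w.2 ≤ (2 * v.1 + 2) * v.2 / v.1 := by
        rw [le_div_iff₀ hv1]
        have e1 : v.2 * w.1 ≤ v.2 * (2 * v.1 + 2) :=
          mul_le_mul_of_nonneg_left wbound1 hvy.le
        linarith
      have hball : dist w (0 : ℝ × ℝ) ≤ M := by
        rw [Prod.dist_eq]
        apply max_le
        · rw [Real.dist_eq]
          have : (0 : ℝ × ℝ).1 = 0 := rfl
          rw [this, sub_zero, abs_le]
          constructor
          · linarith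
          · rw [hM]; linarith
        · rw [Real.dist_eq]
          have : (0 : ℝ × ℝ).2 = 0 := rfl
          rw [this, sub_zero, abs_le]
          constructor
          · linarith
          · rw [hM]; linarith
      have hεg : ε ≤ (w.1 - A * w.2 - 1) / w.2 := hεbd w hwΛ hwne hw2 hle hball
      have h7 : ε / 2 < (w.1 - A * w.2 - 1) / w.2 := by linarith
      rw [lt_div_iff₀ hw2] at h7
      rw [ha'] at hwc2
      linarith [h7, hwc2]
  -- assemble
  refine ⟨⟨lower, upper⟩, winp, hOC, ?_, hleast⟩
  have hsub : Set.Ioo A a' ⊆ interior {a : ℝ | Wins Λ v (a, 1)} := by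
    apply interior_maximal _ isOpen_Ioo
    intro z hz
    exact hOC.out (winp : A ∈ {a : ℝ | Wins Λ v (a, 1)})
      (hwina' : a' ∈ {a : ℝ | Wins Λ v (a, 1)}) ⟨hz.1.le, hz.2.le⟩
  refine ⟨A + ε / 4, hsub ⟨by linarith, ?_⟩⟩
  rw [ha']
  linarith
end
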